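/- For every p ∈ (0,1] and every ε > 0, there exist N, M and a match quality matrix θ ∈ [0,1]^{N×M} such that the greedy policy (offering all providers to all patients) attains expected match quality at most ε times that of the optimal match-quality policy. In particular, one can take N = M, θ_{1,1}=1, θ_{i,1}=2Δ for i≠1, and θ_{i,j}=Δ for j≠1, with N = 3/(εp) and Δ = min(ε/(3N), pε/6). -/

import Mathlib

open Finset

noncomputable section
open scoped Classical

/-- Most preferred (highest quality) provider in `S`, ties broken by least index. -/
def pick {M : ℕ} (q : Fin M → ℝ) (S : Finset (Fin M)) : Option (Fin M) :=
  if h : S.Nonempty then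
    some ((S.filter fun j => ∀ k ∈ S, q k ≤ q j).min' (by
      obtain ⟨j, hj, hmax⟩ := S.exists_max_image q h
      exact ⟨j, Finset.mem_filter.2 ⟨hj, hmax⟩⟩))
  else none

/-- State (available providers, matches so far) of the sequential matching process
after the first `t` patients (in the order `σ`) have responded.  Patient `i` accepts
their most preferred offered available provider iff the coin `c i` comes up true. -/
def runProc (N M : ℕ) (θ : Fin N → Fin M → ℝ) (X : Fin N → Fin M → Bool)
    (σ : Equiv.Perm (Fin N)) (c : Fin N → Bool) :
    ℕ → Finset (Fin M) × (Fin N → Option (Fin M))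
  | 0 => (Finset.univ, fun _ => none)
  | t + 1 =>
    let st := runProc N M θ X σ c t
    if ht : t < N then
      let i := σ ⟨t, ht⟩
      if c i then
        match pick (θ i) (st.1.filter fun j => X i j) with
        | some j => (st.1.erase j, Function.update st.2 i (some j))
        | none => st
      else st
    else st

/-- The realized matches of the process. -/
def matchesOf (N M : ℕ) (θ : Fin N → Fin M → ℝ) (X : Fin N → Fin M → Bool)
    (σ : Equiv.Perm (Fin N)) (c : Fin N → Bool) : Fin N → Option (Fin M) :=
  (runProc N M θ X σ c N).2

/-- Probability weight of a coin-flip outcome (each coin independently true w.p. `p`). -/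
def coinWt (N : ℕ) (p : ℝ) (c : Fin N → Bool) : ℝ :=
  ∏ i, if c i then p else 1 - p

/-- Match rate: expected fraction of matched patients, over a uniformly random
response order and independent acceptance coins of bias `p`. -/
def MR (N M : ℕ) (p : ℝ) (θ : Fin N → Fin M → ℝ) (X : Fin N → Fin M → Bool) : ℝ :=
  (1 / (N.factorial : ℝ)) * ∑ σ : Equiv.Perm (Fin N), ∑ c : Fin N → Bool,
    coinWt N p c *
      (((Finset.univ.filter fun i => (matchesOf N M θ X σ c i).isSome).card : ℝ) / N)

def qualOf {N M : ℕ} (θ : Fin N → Fin M → ℝ) (m : Fin N → Option (Fin M)) (i : Fin N) : ℝ :=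
  match m i with
  | some j => θ i j
  | none => 0

/-- Match quality: expected average `θ`-value over realized matches. -/
def MQ (N M : ℕ) (p : ℝ) (θ : Fin N → Fin M → ℝ) (X : Fin N → Fin M → Bool) : ℝ :=
  (1 / (N.factorial : ℝ)) * ∑ σ : Equiv.Perm (Fin N), ∑ c : Fin N → Bool,
    coinWt N p c * ((1 / (N : ℝ)) * ∑ i, qualOf θ (matchesOf N M θ X σ c) i)

/-- Assortments are disjoint singletons: each patient offered at most one provider,
each provider offered to at most one patient. -/
def IsPairwise (N M : ℕ) (X : Fin N → Fin M → Bool) : Prop :=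
  (∀ i, (Finset.univ.filter fun j => X i j).card ≤ 1) ∧
  (∀ j, (Finset.univ.filter fun i => X i j).card ≤ 1)

/-- Total θ-weight of the pairs selected by a 0-1 matrix. -/
def weightOf (N M : ℕ) (θ : Fin N → Fin M → ℝ) (X : Fin N → Fin M → Bool) : ℝ :=
  ∑ i, ∑ j, if X i j then θ i j else 0


/-! ### Auxiliary lemmas -/

section Aux

lemma pick_none {M : ℕ} (q : Fin M → ℝ) (S : Finset (Fin M)) (h : ¬ S.Nonempty) :
    pick q S = none := by simp [pick, h]

lemma not_nonempty_of_pick_none {M : ℕ} (q : Fin M → ℝ) (S : Finset (Fin M))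
    (h : pick q S = none) : ¬ S.Nonempty := by
  by_contra hS; simp [pick, hS] at h

lemma pick_one (q : Fin 1 → ℝ) (S : Finset (Fin 1)) (h : S.Nonempty) : pick q S = some 0 := by
  simp only [pick, dif_pos h]; congr 1; exact Subsingleton.elim _ _

variable {N : ℕ} [NeZero N] (θ : Fin N → Fin 1 → ℝ) (σ : Equiv.Perm (Fin N)) (c : Fin N → Bool)

omit [NeZero N] in
/-- Greedy, provider availability: if the single provider is still available after `s`
steps, then all coins so far were false. -/
lemma greedy_avail : ∀ s, (0 : Fin 1) ∈ (runProc N 1 θ (fun _ _ => true) σ c s).1 →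
    ∀ t : Fin N, (t : ℕ) < s → c (σ t) = false := by
  intro s
  induction s with
  | zero => intro _ t ht; omega
  | succ s ih =>
    intro hmem t ht
    by_cases hs : s < N
    · by_cases hc : c (σ ⟨s, hs⟩) = true
      · simp only [runProc, dif_pos hs, hc, if_true, Finset.filter_true] at hmem
        rcases hp : pick (θ (σ ⟨s, hs⟩)) (runProc N 1 θ (fun _ _ => true) σ c s).1 with _ | j
        · rw [hp] at hmem
          have := not_nonempty_of_pick_none _ _ hp
          exact absurd ⟨_, hmem⟩ this
        · rw [hp] at hmem
          have hj : j = 0 := Subsingleton.elim _ _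
          subst hj
          exact absurd hmem (Finset.notMem_erase _ _)
      · simp only [runProc, dif_pos hs, hc, if_false] at hmem
        rcases Nat.lt_succ_iff_lt_or_eq.1 ht with h | h
        · exact ih hmem t h
        · have : t = ⟨s, hs⟩ := Fin.ext h
          rw [this]; exact Bool.not_eq_true _ |>.mp hc
    · simp only [runProc, dif_neg hs] at hmem
      exact ih hmem t (lt_of_lt_of_le t.isLt (le_of_not_gt hs))

/-- Greedy: if patient 0 is matched after `s` steps, then `c 0` is true and all coins
before patient 0's turn are false. -/
lemma greedy_matched : ∀ s, (runProc N 1 θ (fun _ _ => true) σ c s).2 0 ≠ none →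
    c 0 = true ∧ ∀ t : Fin N, (t : ℕ) < ((σ.symm 0 : Fin N) : ℕ) → c (σ t) = false := by
  intro s
  induction s with
  | zero => intro h; simp [runProc] at h
  | succ s ih =>
    intro h
    by_cases hs : s < N
    · by_cases hc : c (σ ⟨s, hs⟩) = true
      · simp only [runProc, dif_pos hs, hc, if_true, Finset.filter_true] at h
        rcases hp : pick (θ (σ ⟨s, hs⟩)) (runProc N 1 θ (fun _ _ => true) σ c s).1 with _ | j
        · rw [hp] at h; exact ih h
        · rw [hp] at h
          have h' : Function.update (runProc N 1 θ (fun _ _ => true) σ c s).2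
              (σ ⟨s, hs⟩) (some j) 0 ≠ none := h
          by_cases hi : σ ⟨s, hs⟩ = 0
          · have hS : (runProc N 1 θ (fun _ _ => true) σ c s).1.Nonempty := by
              by_contra hS; rw [pick_none _ _ hS] at hp; simp at hp
            obtain ⟨y, hy⟩ := hS
            have hy0 : (0 : Fin 1) ∈ (runProc N 1 θ (fun _ _ => true) σ c s).1 := by
              have : y = 0 := Subsingleton.elim _ _; rwa [this] at hy
            have hk : σ.symm 0 = ⟨s, hs⟩ := by rw [← hi, Equiv.symm_apply_apply]
            refine ⟨by rw [← hi]; exact hc, ?_⟩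
            intro t ht
            rw [hk] at ht
            exact greedy_avail θ σ c s hy0 t ht
          · rw [Function.update_of_ne (Ne.symm hi)] at h'
            exact ih h'
      · simp only [runProc, dif_pos hs, hc, if_false] at h
        exact ih h
    · simp only [runProc, dif_neg hs] at h
      exact ih h

end Aux

section Coins

variable {N : ℕ}

lemma coinWt_nonneg (p : ℝ) (hp0 : 0 ≤ p) (hp1 : p ≤ 1) (c : Fin N → Bool) :
    0 ≤ coinWt N p c := by
  refine Finset.prod_nonneg fun i _ => ?_
  split <;> linarith

/-- Expected value of the indicator that coin `i0` is true and all coins in `B` are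
false. -/
lemma sum_coinWt_event (p : ℝ) (i0 : Fin N) (B : Finset (Fin N)) (hB : i0 ∉ B) :
    ∑ c : Fin N → Bool, coinWt N p c *
      (if c i0 = true ∧ (∀ i ∈ B, c i = false) then 1 else 0)
      = p * (1 - p) ^ B.card := by
  have key : ∀ c : Fin N → Bool, coinWt N p c *
      (if c i0 = true ∧ (∀ i ∈ B, c i = false) then (1:ℝ) else 0)
      = ∏ i, ((if c i then p else 1 - p) *
          (if i = i0 then (if c i then 1 else 0)
            else if i ∈ B then (if c i then 0 else 1) else 1)) := by
    intro c
    rw [Finset.prod_mul_distrib]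
    unfold coinWt
    congr 1
    by_cases h : c i0 = true ∧ (∀ i ∈ B, c i = false)
    · rw [if_pos h]
      refine (Finset.prod_eq_one ?_).symm
      intro i _
      by_cases h1 : i = i0
      · subst h1; simp [h.1]
      · by_cases h2 : i ∈ B
        · simp [h1, h2, h.2 i h2]
        · simp [h1, h2]
    · rw [if_neg h]
      by_cases h0 : c i0 = true
      · have h1 : ∃ i ∈ B, c i = true := by
          by_contra hcon
          push_neg at hcon
          exact h ⟨h0, fun i hi => by
            have := hcon i hi
            exact Bool.not_eq_true _ |>.mp this⟩
        obtain ⟨i, hiB, hci⟩ := h1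
        refine (Finset.prod_eq_zero (Finset.mem_univ i) ?_).symm
        have hne : i ≠ i0 := fun he => hB (he ▸ hiB)
        simp [hne, hiB, hci]
      · refine (Finset.prod_eq_zero (Finset.mem_univ i0) ?_).symm
        simp [Bool.not_eq_true _ |>.mp h0]
  calc ∑ c : Fin N → Bool, coinWt N p c *
        (if c i0 = true ∧ (∀ i ∈ B, c i = false) then (1:ℝ) else 0)
      = ∑ c : Fin N → Bool, ∏ i, ((if c i then p else 1 - p) *
          (if i = i0 then (if c i then 1 else 0)
            else if i ∈ B then (if c i then 0 else 1) else 1)) :=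
        Finset.sum_congr rfl fun c _ => key c
    _ = ∏ i : Fin N, ∑ b : Bool, ((if b then p else 1 - p) *
          (if i = i0 then (if b then 1 else 0)
            else if i ∈ B then (if b then 0 else 1) else 1)) := by
        rw [← Fintype.piFinset_univ]
        exact (Finset.prod_univ_sum (fun _ : Fin N => (Finset.univ : Finset Bool))
          (fun i b => (if b then p else 1 - p) *
            (if i = i0 then (if b then 1 else 0)
              else if i ∈ B then (if b then 0 else 1) else 1))).symm
    _ = ∏ i : Fin N, (if i = i0 then p else if i ∈ B then 1 - p else 1) := by
        refine Finset.prod_congr rfl fun i _ => ?_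
        rw [Fintype.sum_bool]
        by_cases h1 : i = i0
        · simp [h1]
        · by_cases h2 : i ∈ B <;> simp [h1, h2] <;> ring
    _ = p * (1 - p) ^ B.card := by
        rw [← Finset.mul_prod_erase Finset.univ _ (Finset.mem_univ i0), if_pos rfl]
        congr 1
        have hsub : B ⊆ Finset.univ.erase i0 := fun x hx =>
          Finset.mem_erase.2 ⟨fun he => hB (he ▸ hx), Finset.mem_univ x⟩
        rw [← Finset.prod_subset hsub (fun x hx hxB => by
          have hxne : x ≠ i0 := (Finset.mem_erase.1 hx).1
          simp [hxne, hxB])]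
        rw [Finset.prod_congr rfl (fun x hx => ?_), Finset.prod_const]
        have hxne : x ≠ i0 := fun he => hB (he ▸ hx)
        simp [hxne, hx]

end Coins

section Single

variable {N : ℕ} [NeZero N] (θ : Fin N → Fin 1 → ℝ) (σ : Equiv.Perm (Fin N)) (c : Fin N → Bool)

/-- The assortment offering provider 0 to patient 0 only. -/
def X₀ (N : ℕ) [NeZero N] : Fin N → Fin 1 → Bool := fun i _ => decide (i = 0)

lemma single_run : ∀ s, runProc N 1 θ (X₀ N) σ c s =
    if c 0 = true ∧ ((σ.symm 0 : Fin N) : ℕ) < s then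
      ((Finset.univ : Finset (Fin 1)).erase 0,
        Function.update (fun _ => none) (0 : Fin N) (some (0 : Fin 1)))
    else (Finset.univ, fun _ => none) := by
  intro s
  induction s with
  | zero => simp [runProc]
  | succ s ih =>
    by_cases hs : s < N
    · by_cases hi : σ ⟨s, hs⟩ = (0 : Fin N)
      · have hk : ((σ.symm 0 : Fin N) : ℕ) = s := by
          rw [← hi, Equiv.symm_apply_apply]
        have hnot : ¬ (c 0 = true ∧ ((σ.symm 0 : Fin N) : ℕ) < s) := by
          rintro ⟨-, hlt⟩; omega
        by_cases hc : c (σ ⟨s, hs⟩) = true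
        · have hc0 : c 0 = true := by rwa [hi] at hc
          simp only [runProc, dif_pos hs, hc, if_true]
          rw [ih, if_neg hnot]
          have hfil : ((Finset.univ : Finset (Fin 1)).filter
              fun j => (X₀ N (σ ⟨s, hs⟩) j : Prop)) = Finset.univ := by
            simp [X₀, hi]
          simp only [hfil]
          rw [pick_one _ _ ⟨0, Finset.mem_univ 0⟩]
          rw [if_pos ⟨hc0, by omega⟩, hi]
        · have hc0 : ¬ c 0 = true := by rwa [hi] at hc
          simp only [runProc, dif_pos hs]
          rw [if_neg hc, ih, if_neg hnot, if_neg (fun h => hc0 h.1)]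
      · have hkne : ((σ.symm 0 : Fin N) : ℕ) ≠ s := by
          intro h
          apply hi
          have : σ.symm 0 = ⟨s, hs⟩ := Fin.ext h
          rw [← this, Equiv.apply_symm_apply]
        have hcond : (c 0 = true ∧ ((σ.symm 0 : Fin N) : ℕ) < s + 1) ↔
            (c 0 = true ∧ ((σ.symm 0 : Fin N) : ℕ) < s) := by
          constructor <;> rintro ⟨h1, h2⟩ <;> exact ⟨h1, by omega⟩
        have hfil : ∀ (S : Finset (Fin 1)), (S.filter
            fun j => (X₀ N (σ ⟨s, hs⟩) j : Prop)) = ∅ := by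
          intro S
          refine Finset.filter_eq_empty_iff.2 fun _ _ => ?_
          simp [X₀, hi]
        by_cases hc : c (σ ⟨s, hs⟩) = true
        · simp only [runProc, dif_pos hs, hc, if_true, hfil,
            pick_none _ _ Finset.not_nonempty_empty]
          rw [ih, if_congr hcond rfl rfl]
        · simp only [runProc, dif_pos hs]
          rw [if_neg hc, ih, if_congr hcond rfl rfl]
    · have hcond : (c 0 = true ∧ ((σ.symm 0 : Fin N) : ℕ) < s + 1) ↔
          (c 0 = true ∧ ((σ.symm 0 : Fin N) : ℕ) < s) := by
        have : ((σ.symm 0 : Fin N) : ℕ) < N := (σ.symm 0).isLt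
        constructor <;> rintro ⟨h1, h2⟩ <;> exact ⟨h1, by omega⟩
      simp only [runProc, dif_neg hs]
      rw [ih, if_congr hcond rfl rfl]

lemma single_qual_sum :
    (∑ i, qualOf θ (matchesOf N 1 θ (X₀ N) σ c) i) = if c 0 = true then θ 0 0 else 0 := by
  have hk : ((σ.symm 0 : Fin N) : ℕ) < N := (σ.symm 0).isLt
  unfold matchesOf
  rw [single_run]
  by_cases hc : c 0 = true
  · rw [if_pos ⟨hc, hk⟩, if_pos hc]
    rw [Finset.sum_eq_single (0 : Fin N)]
    · simp [qualOf]
    · intro i _ hi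
      simp [qualOf, Function.update_of_ne hi]
    · intro h; exact absurd (Finset.mem_univ _) h
  · rw [if_neg (fun h => hc h.1), if_neg hc]
    refine Finset.sum_eq_zero fun i _ => ?_
    simp [qualOf]

end Single

section MQcalc

variable {N : ℕ} [NeZero N]

/-- The bad instance's quality matrix. -/
def θG (N : ℕ) [NeZero N] : Fin N → Fin 1 → ℝ := fun i _ => if i = 0 then 1 else 0

lemma MQ_single (p : ℝ) : MQ N 1 p (θG N) (X₀ N) = p / N := by
  unfold MQ
  have hσ : ∀ σ : Equiv.Perm (Fin N), (∑ c : Fin N → Bool, coinWt N p c *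
      ((1 / (N : ℝ)) * ∑ i, qualOf (θG N) (matchesOf N 1 (θG N) (X₀ N) σ c) i))
      = (1 / (N : ℝ)) * p := by
    intro σ
    have hev : ∀ c : Fin N → Bool,
        (if c 0 = true then (1:ℝ) else 0)
          = (if c 0 = true ∧ (∀ i ∈ (∅ : Finset (Fin N)), c i = false) then (1:ℝ) else 0) := by
      intro c
      refine (if_congr ?_ rfl rfl)
      simp
    calc (∑ c : Fin N → Bool, coinWt N p c *
        ((1 / (N : ℝ)) * ∑ i, qualOf (θG N) (matchesOf N 1 (θG N) (X₀ N) σ c) i))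
        = ∑ c : Fin N → Bool, (1 / (N : ℝ)) * (coinWt N p c *
            (if c 0 = true ∧ (∀ i ∈ (∅ : Finset (Fin N)), c i = false) then (1:ℝ) else 0)) := by
          refine Finset.sum_congr rfl fun c _ => ?_
          rw [single_qual_sum]
          have : (θG N) 0 0 = 1 := by simp [θG]
          rw [this, hev c]
          ring
      _ = (1 / (N : ℝ)) * (p * (1 - p) ^ (∅ : Finset (Fin N)).card) := by
          rw [← Finset.mul_sum, sum_coinWt_event p 0 ∅ (Finset.notMem_empty _)]
      _ = (1 / (N : ℝ)) * p := by simp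
  rw [Finset.sum_congr rfl fun σ _ => hσ σ, Finset.sum_const, Finset.card_univ,
    Fintype.card_perm, Fintype.card_fin, nsmul_eq_mul]
  have hN : (N : ℝ) ≠ 0 := Nat.cast_ne_zero.2 (NeZero.ne N)
  have hfac : ((N.factorial : ℝ)) ≠ 0 := Nat.cast_ne_zero.2 (Nat.factorial_ne_zero N)
  field_simp

lemma greedy_qual_le (σ : Equiv.Perm (Fin N)) (c : Fin N → Bool) :
    (∑ i, qualOf (θG N) (matchesOf N 1 (θG N) (fun _ _ => true) σ c) i)
      ≤ (if c 0 = true ∧ (∀ i ∈ (Finset.Iio (σ.symm 0)).image σ, c i = false)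
          then (1:ℝ) else 0) := by
  set m := matchesOf N 1 (θG N) (fun _ _ => true) σ c with hm
  have hz : ∀ i : Fin N, i ≠ 0 → qualOf (θG N) m i = 0 := by
    intro i hi
    unfold qualOf
    cases m i <;> simp [θG, hi]
  rw [Finset.sum_eq_single (0 : Fin N) (fun i _ hi => hz i hi)
    (fun h => absurd (Finset.mem_univ _) h)]
  rcases h0 : m 0 with _ | j
  · have : qualOf (θG N) m 0 = 0 := by unfold qualOf; rw [h0]
    rw [this]
    split <;> norm_num
  · have h1 : qualOf (θG N) m 0 = 1 := by unfold qualOf; rw [h0]; simp [θG]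
    rw [h1]
    have hne : m 0 ≠ none := by rw [h0]; exact Option.some_ne_none _
    obtain ⟨hc0, hall⟩ := greedy_matched (θG N) σ c N hne
    have hBall : ∀ i ∈ (Finset.Iio (σ.symm 0)).image σ, c i = false := by
      intro i hi
      obtain ⟨t, ht, rfl⟩ := Finset.mem_image.1 hi
      exact hall t (Fin.lt_def.mp (Finset.mem_Iio.1 ht))
    rw [if_pos ⟨hc0, hBall⟩]

lemma MQ_greedy_le {n : ℕ} (p : ℝ) (hp0 : 0 < p) (hp1 : p ≤ 1) :
    MQ (n+1) 1 p (θG (n+1)) (fun _ _ => true) ≤ 1 / ((n+1 : ℝ) * (n+1)) := by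
  set N := n + 1 with hNdef
  have hNpos : (0:ℝ) < (N : ℝ) := by positivity
  set f : Fin N → ℝ := fun j => p * (1 - p) ^ (j : ℕ) with hf
  -- step b : per-σ bound
  have hstepb : ∀ σ : Equiv.Perm (Fin N), (∑ c : Fin N → Bool, coinWt N p c *
      ((1 / (N : ℝ)) * ∑ i, qualOf (θG N) (matchesOf N 1 (θG N) (fun _ _ => true) σ c) i))
      ≤ (1 / (N : ℝ)) * f (σ.symm 0) := by
    intro σ
    have hB : (0 : Fin N) ∉ (Finset.Iio (σ.symm 0)).image σ := by
      intro h
      obtain ⟨t, ht, hσt⟩ := Finset.mem_image.1 h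
      have : t = σ.symm 0 := by rw [← hσt, Equiv.symm_apply_apply]
      rw [this] at ht
      exact absurd (Finset.mem_Iio.1 ht) (lt_irrefl _)
    have hcard : ((Finset.Iio (σ.symm 0)).image σ).card = ((σ.symm 0 : Fin N) : ℕ) := by
      rw [Finset.card_image_of_injective _ σ.injective, Fin.card_Iio]
    calc (∑ c : Fin N → Bool, coinWt N p c *
        ((1 / (N : ℝ)) * ∑ i, qualOf (θG N) (matchesOf N 1 (θG N) (fun _ _ => true) σ c) i))
        ≤ ∑ c : Fin N → Bool, (1 / (N : ℝ)) * (coinWt N p c *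
            (if c 0 = true ∧ (∀ i ∈ (Finset.Iio (σ.symm 0)).image σ, c i = false)
              then (1:ℝ) else 0)) := by
          refine Finset.sum_le_sum fun c _ => ?_
          have h1 := greedy_qual_le σ c
          have h2 : 0 ≤ coinWt N p c := coinWt_nonneg p (le_of_lt hp0) hp1 c
          have h3 : (0:ℝ) ≤ 1 / (N : ℝ) := by positivity
          calc coinWt N p c * ((1 / (N : ℝ)) *
              ∑ i, qualOf (θG N) (matchesOf N 1 (θG N) (fun _ _ => true) σ c) i)
              ≤ coinWt N p c * ((1 / (N : ℝ)) *
                (if c 0 = true ∧ (∀ i ∈ (Finset.Iio (σ.symm 0)).image σ, c i = false)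
                  then (1:ℝ) else 0)) := by
                exact mul_le_mul_of_nonneg_left (mul_le_mul_of_nonneg_left h1 h3) h2
            _ = (1 / (N : ℝ)) * (coinWt N p c *
                (if c 0 = true ∧ (∀ i ∈ (Finset.Iio (σ.symm 0)).image σ, c i = false)
                  then (1:ℝ) else 0)) := by ring
      _ = (1 / (N : ℝ)) * (p * (1 - p) ^ ((σ.symm 0 : Fin N) : ℕ)) := by
          rw [← Finset.mul_sum, sum_coinWt_event p 0 _ hB, hcard]
      _ = (1 / (N : ℝ)) * f (σ.symm 0) := rfl
  -- step c : sum over σ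
  have hstepc : (∑ σ : Equiv.Perm (Fin N), f (σ.symm 0)) = (n.factorial : ℝ) * ∑ j : Fin N, f j := by
    have h1 : (∑ σ : Equiv.Perm (Fin N), f (σ.symm 0)) = ∑ σ : Equiv.Perm (Fin N), f (σ 0) := by
      refine Fintype.sum_bijective (fun σ => σ⁻¹)
        ⟨fun a b h => inv_injective h, fun σ => ⟨σ⁻¹, inv_inv σ⟩⟩ _ _ fun σ => rfl
    rw [h1]
    have h2 : (∑ σ : Equiv.Perm (Fin N), f (σ 0))
        = ∑ x : Fin N × Equiv.Perm (Fin n), f ((Equiv.Perm.decomposeFin.symm x) 0) := by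
      refine Fintype.sum_equiv Equiv.Perm.decomposeFin _ _ fun σ => ?_
      rw [Equiv.symm_apply_apply]
    rw [h2, Fintype.sum_prod_type]
    have h3 : ∀ (j : Fin N) (τ : Equiv.Perm (Fin n)),
        f ((Equiv.Perm.decomposeFin.symm (j, τ)) 0) = f j := fun j τ => by
      rw [Equiv.Perm.decomposeFin_symm_apply_zero]
    simp_rw [h3]
    rw [Finset.sum_congr rfl fun j _ => Finset.sum_const _]
    simp [Finset.mul_sum, Fintype.card_perm, mul_comm]
  have hgeom : (∑ j : Fin N, f j) ≤ 1 := by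
    have : (∑ j : Fin N, f j) = p * ∑ i ∈ Finset.range N, (1 - p) ^ i := by
      rw [Finset.mul_sum, hf]
      exact Fin.sum_univ_eq_sum_range (fun i => p * (1 - p) ^ i) N
    rw [this]
    have hgm := geom_sum_mul (1 - p) N
    have hpow : (0:ℝ) ≤ (1 - p) ^ N := pow_nonneg (by linarith) N
    nlinarith [hgm]
  -- assemble
  unfold MQ
  have hfac0 : (0:ℝ) < (N.factorial : ℝ) := by
    exact_mod_cast Nat.factorial_pos N
  have hmono : (∑ σ : Equiv.Perm (Fin N), ∑ c : Fin N → Bool, coinWt N p c *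
      ((1 / (N : ℝ)) * ∑ i, qualOf (θG N) (matchesOf N 1 (θG N) (fun _ _ => true) σ c) i))
      ≤ ∑ σ : Equiv.Perm (Fin N), (1 / (N : ℝ)) * f (σ.symm 0) :=
    Finset.sum_le_sum fun σ _ => hstepb σ
  calc (1 / (N.factorial : ℝ)) * (∑ σ : Equiv.Perm (Fin N), ∑ c : Fin N → Bool, coinWt N p c *
        ((1 / (N : ℝ)) * ∑ i, qualOf (θG N) (matchesOf N 1 (θG N) (fun _ _ => true) σ c) i))
      ≤ (1 / (N.factorial : ℝ)) * ∑ σ : Equiv.Perm (Fin N), (1 / (N : ℝ)) * f (σ.symm 0) := by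
        exact mul_le_mul_of_nonneg_left hmono (by positivity)
    _ = (1 / (N.factorial : ℝ)) * ((1 / (N : ℝ)) * ((n.factorial : ℝ) * ∑ j : Fin N, f j)) := by
        rw [← Finset.mul_sum, hstepc]
    _ ≤ (1 / (N.factorial : ℝ)) * ((1 / (N : ℝ)) * ((n.factorial : ℝ) * 1)) := by
        have hnf : (0:ℝ) ≤ (n.factorial : ℝ) := by positivity
        have := mul_le_mul_of_nonneg_left hgeom hnf
        have h2 := mul_le_mul_of_nonneg_left this (le_of_lt (by positivity : (0:ℝ) < 1 / (N:ℝ)))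
        exact mul_le_mul_of_nonneg_left h2 (by positivity)
    _ = 1 / ((n+1 : ℝ) * (n+1)) := by
        have : (N.factorial : ℝ) = (N : ℝ) * (n.factorial : ℝ) := by
          rw [hNdef, Nat.factorial_succ]
          push_cast
          ring
        rw [this]
        have hnf : (0:ℝ) < (n.factorial : ℝ) := by exact_mod_cast Nat.factorial_pos n
        have hNr : (N : ℝ) = (n+1 : ℝ) := by rw [hNdef]; push_cast; ring
        rw [hNr]
        field_simp

end MQcalc

/-- For every `p ∈ (0,1]` and every `ε > 0`, there exist `N`, `M` and a match quality
matrix `θ ∈ [0,1]^{N×M}` such that the greedy policy (offering all providers to all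
patients) attains expected match quality at most `ε` times that of the optimal
match-quality policy — where the optimum (taken over all 0-1 assortments) is moreover
strictly positive, so the bound is not vacuous. -/
theorem greedy_arbitrarily_bad (p : ℝ) (hp0 : 0 < p) (hp1 : p ≤ 1) (ε : ℝ) (hε : 0 < ε) :
    ∃ (N M : ℕ) (_ : 0 < N) (θ : Fin N → Fin M → ℝ),
      (∀ i j, θ i j ∈ Set.Icc (0 : ℝ) 1) ∧
      0 < (⨆ X : Fin N → Fin M → Bool, MQ N M p θ X) ∧
      MQ N M p θ (fun _ _ => true) ≤ ε * ⨆ X : Fin N → Fin M → Bool, MQ N M p θ X := by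
  set n : ℕ := ⌈1 / (ε * p)⌉₊ with hn
  refine ⟨n + 1, 1, Nat.succ_pos n, θG (n+1), ?_, ?_, ?_⟩
  · intro i j
    unfold θG
    split <;> constructor <;> norm_num
  · -- the supremum is positive
    have h1 : MQ (n+1) 1 p (θG (n+1)) (X₀ (n+1)) = p / (n+1 : ℝ) := by
      rw [MQ_single p]; norm_num
    have hpos : 0 < MQ (n+1) 1 p (θG (n+1)) (X₀ (n+1)) := by
      rw [h1]; positivity
    refine lt_of_lt_of_le hpos ?_
    exact le_ciSup (Set.Finite.bddAbove (Set.finite_range _)) (X₀ (n+1))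
  · have hNr : (0:ℝ) < (n+1 : ℝ) := by positivity
    have hceil : 1 / (ε * p) ≤ (n : ℝ) := Nat.le_ceil _
    have hεp : 0 < ε * p := mul_pos hε hp0
    have hkey : 1 / ((n+1 : ℝ) * (n+1)) ≤ ε * (p / (n+1 : ℝ)) := by
      rw [div_le_iff₀ (by positivity)]
      have h2 : 1 ≤ ε * p * (n+1 : ℝ) := by
        rw [← div_le_iff₀' hεp] at *
        linarith
      have : ε * (p / (n+1:ℝ)) * ((n+1:ℝ) * (n+1:ℝ)) = ε * p * (n+1:ℝ) := by
        field_simp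
      rw [this]; exact h2
    have h1 : MQ (n+1) 1 p (θG (n+1)) (X₀ (n+1)) = p / (n+1 : ℝ) := by
      rw [MQ_single p]; norm_num
    have hsup : MQ (n+1) 1 p (θG (n+1)) (X₀ (n+1))
        ≤ ⨆ X : Fin (n+1) → Fin 1 → Bool, MQ (n+1) 1 p (θG (n+1)) X :=
      le_ciSup (Set.Finite.bddAbove (Set.finite_range _)) (X₀ (n+1))
    calc MQ (n+1) 1 p (θG (n+1)) (fun _ _ => true)
        ≤ 1 / ((n+1 : ℝ) * (n+1)) := MQ_greedy_le p hp0 hp1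
      _ ≤ ε * (p / (n+1 : ℝ)) := hkey
      _ = ε * MQ (n+1) 1 p (θG (n+1)) (X₀ (n+1)) := by rw [h1]
      _ ≤ ε * ⨆ X : Fin (n+1) → Fin 1 → Bool, MQ (n+1) 1 p (θG (n+1)) X :=
          mul_le_mul_of_nonneg_left hsup (le_of_lt hε)

end
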